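/- arXiv:1905.01148 — 2 statements merged into one kernel-verified Lean document; each statement's English description precedes it below -/
import Mathlib

section
/- Let 𝒜 be an abelian length category. The Hasse arrows in tors 𝒜 ending at the zero torsion class are exactly Filt S → 0 for simple objects S of 𝒜, each labeled by S; and the Hasse arrows starting at 𝒜 are exactly 𝒜 → ^⊥S for simple objects S, each labeled by S. Moreover, for simples S, S', one has Filt S ⊆ ^⊥S' if and only if S ≇ S'. -/
open CategoryTheory CategoryTheory.Limits

universe v u

attribute [local instance] CategoryTheory.Abelian.hasFiniteBiproducts

variable (C : Type u) [Category.{v} C] [Abelian C]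

/-- The right Hom-perpendicular category of a class of objects. -/
def RPerp (X : Set C) : Set C := {Y | ∀ A ∈ X, ∀ f : A ⟶ Y, f = 0}

/-- The left Hom-perpendicular category of a class of objects. -/
def LPerp (X : Set C) : Set C := {Y | ∀ A ∈ X, ∀ f : Y ⟶ A, f = 0}

/-- A torsion class: a class of objects containing the zero objects and closed under
quotients and extensions. -/
structure IsTorsionClass (T : Set C) : Prop where
  zero_mem : ∀ Z : C, IsZero Z → Z ∈ T
  quot_mem : ∀ ⦃A B : C⦄ (f : A ⟶ B), Epi f → A ∈ T → B ∈ T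
  ext_mem : ∀ E : ShortComplex C, E.ShortExact → E.X₁ ∈ T → E.X₃ ∈ T → E.X₂ ∈ T

/-- A torsion-free class: a class of objects containing the zero objects and closed under
subobjects and extensions. -/
structure IsTorsionFreeClass (F : Set C) : Prop where
  zero_mem : ∀ Z : C, IsZero Z → Z ∈ F
  sub_mem : ∀ ⦃A B : C⦄ (f : A ⟶ B), Mono f → B ∈ F → A ∈ F
  ext_mem : ∀ E : ShortComplex C, E.ShortExact → E.X₁ ∈ F → E.X₃ ∈ F → E.X₂ ∈ F

/-- The smallest torsion class containing a class of objects. -/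
def torsClosure (X : Set C) : Set C := ⋂₀ {T | IsTorsionClass C T ∧ X ⊆ T}

/-- The smallest torsion-free class containing a class of objects. -/
def torfClosure (X : Set C) : Set C := ⋂₀ {F | IsTorsionFreeClass C F ∧ X ⊆ F}

/-- `ExtStar U W` is the class of objects `X` admitting a short exact sequence
`0 → U' → X → W' → 0` with `U' ∈ U` and `W' ∈ W`. -/
def ExtStar (U W : Set C) : Set C :=
  {X | ∃ E : ShortComplex C, E.ShortExact ∧ E.X₁ ∈ U ∧ E.X₃ ∈ W ∧ Nonempty (E.X₂ ≅ X)}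

/-- The additive closure of a class of objects: direct summands of finite direct sums. -/
def AddClosure (S : Set C) : Set C :=
  {X | ∃ (n : ℕ) (c : Fin n → C), (∀ i, c i ∈ S) ∧ ∃ f : (⨁ c) ⟶ X, IsSplitEpi f}

/-- Membership in the filtration closure `Filt S`: objects admitting a finite filtration
with subquotients in `AddClosure S`. -/
inductive FiltMem (S : Set C) : C → Prop
  | of_isZero (X : C) : IsZero X → FiltMem S X
  | ext (E : ShortComplex C) : E.ShortExact → FiltMem S E.X₁ →
      E.X₃ ∈ AddClosure C S → FiltMem S E.X₂
  | of_iso (X Y : C) (e : X ≅ Y) : FiltMem S X → FiltMem S Y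

/-- The filtration closure of a class of objects. -/
def Filt (S : Set C) : Set C := {X | FiltMem C S X}

/-- The class of quotients of objects of the additive closure of `S`. -/
def Fac (S : Set C) : Set C := {X | ∃ A ∈ AddClosure C S, ∃ f : A ⟶ X, Epi f}

/-- The class of subobjects of objects of the additive closure of `S`. -/
def Subm (S : Set C) : Set C := {X | ∃ A ∈ AddClosure C S, ∃ f : X ⟶ A, Mono f}

/-- A wide subcategory: closed under kernels, cokernels and extensions
(and containing the zero objects). -/
structure IsWide (W : Set C) : Prop where
  zero_mem : ∀ Z : C, IsZero Z → Z ∈ W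
  ker_mem : ∀ ⦃X Y : C⦄ (f : X ⟶ Y), X ∈ W → Y ∈ W → kernel f ∈ W
  coker_mem : ∀ ⦃X Y : C⦄ (f : X ⟶ Y), X ∈ W → Y ∈ W → cokernel f ∈ W
  ext_mem : ∀ E : ShortComplex C, E.ShortExact → E.X₁ ∈ W → E.X₃ ∈ W → E.X₂ ∈ W

/-- A brick: a nonzero object all of whose nonzero endomorphisms are invertible
(equivalently, the endomorphism ring is a division ring). -/
def IsBrick (S : C) : Prop := ¬ IsZero S ∧ ∀ f : S ⟶ S, f = 0 ∨ IsIso f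

/-- A simple object of the full abelian subcategory determined by a wide subcategory `W`. -/
def IsSimpleIn (W : Set C) (S : C) : Prop :=
  S ∈ W ∧ ¬ IsZero S ∧ ∀ ⦃A : C⦄ (f : A ⟶ S), A ∈ W → Mono f → IsZero A ∨ IsIso f

/-- A Hasse arrow `T → U` in the poset of torsion classes: `U ⊊ T` are adjacent. -/
def IsHasseArrow (T U : Set C) : Prop :=
  IsTorsionClass C T ∧ IsTorsionClass C U ∧ U ⊂ T ∧
    ∀ V : Set C, IsTorsionClass C V → U ⊆ V → V ⊆ T → V = U ∨ V = T

/-- A Hasse arrow `F → G` in the poset of torsion-free classes: `G ⊊ F` are adjacent. -/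
def IsHasseArrowTorf (F G : Set C) : Prop :=
  IsTorsionFreeClass C F ∧ IsTorsionFreeClass C G ∧ G ⊂ F ∧
    ∀ H : Set C, IsTorsionFreeClass C H → G ⊆ H → H ⊆ F → H = G ∨ H = F

/-- The brick label of a Hasse arrow `T → U` of torsion classes:
the unique brick in `U^⊥ ∩ T`. -/
def IsBrickLabel (T U : Set C) (S : C) : Prop := IsBrick C S ∧ S ∈ RPerp C U ∩ T

/-- The brick label of a Hasse arrow `F → G` of torsion-free classes:
the unique brick in `^⊥G ∩ F`. -/
def IsBrickLabelTorf (F G : Set C) (S : C) : Prop := IsBrick C S ∧ S ∈ LPerp C G ∩ F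

/-- The left wide subcategory of a torsion class. -/
def WL (T : Set C) : Set C :=
  {X | X ∈ T ∧ ∀ ⦃Y : C⦄ (g : Y ⟶ X), Y ∈ T → kernel g ∈ T}

/-- The right wide subcategory of a torsion-free class. -/
def WR (F : Set C) : Set C :=
  {X | X ∈ F ∧ ∀ ⦃Y : C⦄ (f : X ⟶ Y), Y ∈ F → cokernel f ∈ F}

/-- A Serre subcategory of the abelian category given by a wide subcategory `W`:
closed under extensions, subobjects and quotients within `W`. -/
structure IsSerreIn (W S : Set C) : Prop where
  subset : S ⊆ W
  zero_mem : ∀ Z : C, IsZero Z → Z ∈ S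
  sub_mem : ∀ ⦃A X : C⦄ (f : A ⟶ X), Mono f → A ∈ W → X ∈ S → A ∈ S
  quot_mem : ∀ ⦃X B : C⦄ (f : X ⟶ B), Epi f → B ∈ W → X ∈ S → B ∈ S
  ext_mem : ∀ E : ShortComplex C, E.ShortExact → E.X₂ ∈ W →
    E.X₁ ∈ S → E.X₃ ∈ S → E.X₂ ∈ S

/-- A torsion class of the abelian category given by a wide subcategory `W`:
a subclass of `W` containing the zero objects and closed under quotients in `W`
and extensions. -/
structure IsTorsionClassIn (W X : Set C) : Prop where
  subset : X ⊆ W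
  zero_mem : ∀ Z : C, IsZero Z → Z ∈ X
  quot_mem : ∀ ⦃A B : C⦄ (f : A ⟶ B), Epi f → A ∈ X → B ∈ W → B ∈ X
  ext_mem : ∀ E : ShortComplex C, E.ShortExact → E.X₁ ∈ X → E.X₃ ∈ X → E.X₂ ∈ X
section Auxiliary

open ZeroObject

variable {C}

lemma isZero_of_epi_eq_zero {X Y : C} (f : X ⟶ Y) [Epi f] (h : f = 0) : IsZero Y := by
  rw [IsZero.iff_id_eq_zero]
  rw [← cancel_epi f, h]
  simp

lemma isZero_of_epi_of_isZero {X Y : C} (f : X ⟶ Y) [Epi f] (h : IsZero X) : IsZero Y :=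
  isZero_of_epi_eq_zero f (h.eq_of_src f 0)

/-- The kernel short exact sequence of an epimorphism. -/
lemma shortExact_kernel {X B : C} (g : X ⟶ B) [Epi g] :
    (ShortComplex.mk (kernel.ι g) g (kernel.condition g)).ShortExact :=
  ShortComplex.ShortExact.mk'
    (ShortComplex.exact_of_f_is_kernel _ (kernelIsKernel g)) inferInstance inferInstance

/-- The cokernel short exact sequence of a monomorphism. -/
lemma shortExact_cokernel {A X : C} (f : A ⟶ X) [Mono f] :
    (ShortComplex.mk f (cokernel.π f) (cokernel.condition f)).ShortExact :=
  ShortComplex.ShortExact.mk'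
    (ShortComplex.exact_of_g_is_cokernel _ (cokernelIsCokernel f)) inferInstance inferInstance

/-- The trivial short exact sequence `0 → 0 → X → X → 0`. -/
lemma shortExact_zero_id (X : C) :
    (ShortComplex.mk (0 : (0 : C) ⟶ X) (𝟙 X) (by simp)).ShortExact := by
  refine ShortComplex.Splitting.shortExact (S := ShortComplex.mk (0 : (0 : C) ⟶ X) (𝟙 X) (by simp))
    { r := 0
      s := 𝟙 X
      f_r := (isZero_zero C).eq_of_src _ _
      s_g := by simp
      id := by simp }

lemma IsTorsionClass.iso_mem {T : Set C} (hT : IsTorsionClass C T) {X Y : C} (e : X ≅ Y)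
    (h : X ∈ T) : Y ∈ T :=
  hT.quot_mem e.hom inferInstance h

lemma isTorsionClass_zero : IsTorsionClass C {Z : C | IsZero Z} where
  zero_mem _ h := h
  quot_mem A B f hf hA := by
    have := hf
    exact isZero_of_epi_of_isZero f hA
  ext_mem E hE h1 h3 := by
    have hg : E.g = 0 := h3.eq_of_tgt _ _
    have : Epi E.f := (ShortComplex.exact_iff_epi E hg).mp hE.exact
    exact isZero_of_epi_of_isZero E.f h1

lemma isTorsionClass_lperp (S : C) : IsTorsionClass C (LPerp C {S}) where
  zero_mem Z hZ := fun A _ f => hZ.eq_of_src f 0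
  quot_mem A B f hf hA := by
    intro X hX g
    have : f ≫ g = 0 := hA X hX (f ≫ g)
    rw [← cancel_epi f, this, comp_zero]
  ext_mem E hE h1 h3 := by
    intro X hX g
    have := hE.epi_g
    have hfg : E.f ≫ g = 0 := h1 X hX (E.f ≫ g)
    have hk := hE.exact.g_desc g hfg
    rw [← hk, h3 X hX (hE.exact.desc g hfg), comp_zero]

/-- The splitting of `⨁_{Fin (n+1)} c` as an extension of `c (Fin.last n)` by the rest. -/
lemma finBiproduct_shortExact {n : ℕ} (c : Fin (n + 1) → C) :
    (ShortComplex.mk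
      (biproduct.desc (fun i : Fin n => biproduct.ι c i.castSucc))
      (biproduct.π c (Fin.last n))
      (by
        apply biproduct.hom_ext'
        intro i
        simp [biproduct.ι_π, (Fin.castSucc_lt_last i).ne])).ShortExact := by
  apply ShortComplex.Splitting.shortExact
  refine
    { r := biproduct.lift (fun i : Fin n => biproduct.π c i.castSucc)
      s := biproduct.ι c (Fin.last n)
      f_r := ?_
      s_g := by simp
      id := ?_ }
  · apply biproduct.hom_ext'
    intro i
    apply biproduct.hom_ext
    intro k
    by_cases h : i = k
    · subst h; simp
    · simp [biproduct.ι_π, h, fun hc => h (Fin.castSucc_inj.mp hc)]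
  · have h1 : ∀ i' : Fin n,
        biproduct.ι c i'.castSucc ≫ biproduct.lift (fun i : Fin n => biproduct.π c i.castSucc) =
          biproduct.ι (fun i : Fin n => c i.castSucc) i' := by
      intro i'
      apply biproduct.hom_ext
      intro k
      by_cases h : i' = k
      · subst h; simp
      · simp [biproduct.ι_π, h, fun hc => h (Fin.castSucc_inj.mp hc)]
    have h2 : biproduct.ι c (Fin.last n) ≫
        biproduct.lift (fun i : Fin n => biproduct.π c i.castSucc) = 0 := by
      apply biproduct.hom_ext
      intro k
      simp [biproduct.ι_π, (Fin.castSucc_lt_last k).ne']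
    apply biproduct.hom_ext'
    intro i
    dsimp
    rw [Preadditive.comp_add]
    induction i using Fin.lastCases with
    | last =>
      rw [reassoc_of% h2, zero_comp, zero_add]
      simp
    | cast i' =>
      rw [reassoc_of% (h1 i')]
      simp [biproduct.ι_π, (Fin.castSucc_lt_last i').ne]

lemma biproduct_mem_of_isTorsionClass {T : Set C} (hT : IsTorsionClass C T) :
    ∀ {n : ℕ} (c : Fin n → C), (∀ i, c i ∈ T) → (⨁ c) ∈ T := by
  intro n
  induction n with
  | zero =>
    intro c _
    refine hT.zero_mem _ ?_
    rw [IsZero.iff_id_eq_zero]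
    apply biproduct.hom_ext
    intro j
    exact j.elim0
  | succ n ih =>
    intro c hc
    exact hT.ext_mem _ (finBiproduct_shortExact c) (ih _ (fun i => hc _)) (hc _)

lemma epi_restrict {n : ℕ} {Q : C} (c : Fin (n + 1) → C) (r : ⨁ c ⟶ Q) [Epi r]
    (h : biproduct.ι c (Fin.last n) ≫ r = 0) :
    Epi (biproduct.desc (fun i : Fin n => biproduct.ι c i.castSucc) ≫ r) := by
  constructor
  intro Z u v huv
  rw [← cancel_epi r]
  apply biproduct.hom_ext'
  intro i
  induction i using Fin.lastCases with
  | last =>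
    rw [reassoc_of% h, reassoc_of% h]
    simp
  | cast i' =>
    have := congrArg (fun t => biproduct.ι (fun i : Fin n => c i.castSucc) i' ≫ t) huv
    simpa using this

/-- Every epimorphism out of a finite direct sum of copies of a simple object is split. -/
lemma isSplitEpi_of_epi_from_simple_biproduct (S : C) [Simple S] :
    ∀ (n : ℕ) {Q : C} (p : (⨁ fun _ : Fin n => S) ⟶ Q), Epi p → IsSplitEpi p := by
  intro n
  induction n with
  | zero =>
    intro Q p hp
    have hz : IsZero (⨁ fun _ : Fin 0 => S) := by
      rw [IsZero.iff_id_eq_zero]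
      apply biproduct.hom_ext
      intro j
      exact j.elim0
    have hQ : IsZero Q := isZero_of_epi_of_isZero p hz
    exact ⟨⟨⟨0, hQ.eq_of_src _ _⟩⟩⟩
  | succ n ih =>
    intro Q p hp
    haveI := hp
    by_cases h0 : biproduct.ι (fun _ : Fin (n + 1) => S) (Fin.last n) ≫ p = 0
    · have hepi : Epi (biproduct.desc
          (fun i : Fin n => biproduct.ι (fun _ : Fin (n + 1) => S) i.castSucc) ≫ p) :=
        epi_restrict _ p h0
      obtain ⟨⟨s⟩⟩ := ih _ hepi
      exact ⟨⟨⟨s.section_ ≫ _, by rw [Category.assoc]; exact s.id⟩⟩⟩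
    · have hmono : Mono (biproduct.ι (fun _ : Fin (n + 1) => S) (Fin.last n) ≫ p) :=
        mono_of_nonzero_from_simple h0
      have hr : biproduct.ι (fun _ : Fin (n + 1) => S) (Fin.last n) ≫
          (p ≫ cokernel.π (biproduct.ι (fun _ : Fin (n + 1) => S) (Fin.last n) ≫ p)) = 0 := by
        rw [← Category.assoc]
        exact cokernel.condition _
      haveI hepiπ : Epi (p ≫ cokernel.π
          (biproduct.ι (fun _ : Fin (n + 1) => S) (Fin.last n) ≫ p)) := epi_comp _ _
      have hepi : Epi (biproduct.desc
          (fun i : Fin n => biproduct.ι (fun _ : Fin (n + 1) => S) i.castSucc) ≫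
          (p ≫ cokernel.π (biproduct.ι (fun _ : Fin (n + 1) => S) (Fin.last n) ≫ p))) :=
        epi_restrict _ _ hr
      obtain ⟨⟨s'⟩⟩ := ih _ hepi
      have hses := shortExact_cokernel (biproduct.ι (fun _ : Fin (n + 1) => S) (Fin.last n) ≫ p)
      have ht : (s'.section_ ≫
          biproduct.desc (fun i : Fin n => biproduct.ι (fun _ : Fin (n + 1) => S) i.castSucc) ≫ p) ≫
          cokernel.π (biproduct.ι (fun _ : Fin (n + 1) => S) (Fin.last n) ≫ p) = 𝟙 _ := by
        have := s'.id
        simpa [Category.assoc] using this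
      let sp := ShortComplex.Splitting.ofExactOfSection _ hses.exact
        (s'.section_ ≫
          biproduct.desc (fun i : Fin n => biproduct.ι (fun _ : Fin (n + 1) => S) i.castSucc) ≫ p)
        ht hses.mono_f
      refine ⟨⟨⟨sp.r ≫ biproduct.ι (fun _ : Fin (n + 1) => S) (Fin.last n) +
        cokernel.π (biproduct.ι (fun _ : Fin (n + 1) => S) (Fin.last n) ≫ p) ≫ s'.section_ ≫
          biproduct.desc (fun i : Fin n => biproduct.ι (fun _ : Fin (n + 1) => S) i.castSucc),
        ?_⟩⟩⟩
      have hid := sp.id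
      dsimp at hid
      simp [Preadditive.add_comp] at hid ⊢
      exact hid

lemma mem_addClosure_self (S : C) : S ∈ AddClosure C {S} := by
  exact ⟨1, fun _ => S, fun _ => rfl, biproduct.π (fun _ : Fin 1 => S) 0,
    ⟨⟨⟨biproduct.ι (fun _ : Fin 1 => S) 0, by simp⟩⟩⟩⟩

lemma mem_addClosure_of_isZero (S : C) {X : C} (h : IsZero X) : X ∈ AddClosure C {S} :=
  ⟨0, fun _ => S, fun i => i.elim0, 0, ⟨⟨⟨0, h.eq_of_src _ _⟩⟩⟩⟩

lemma mem_addClosure_of_epi (S : C) [Simple S] {A X : C} (hA : A ∈ AddClosure C {S})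
    (f : A ⟶ X) (hf : Epi f) : X ∈ AddClosure C {S} := by
  obtain ⟨n, c, hc, g, hg⟩ := hA
  have hc' : c = fun _ => S := funext fun i => hc i
  subst hc'
  have : Epi g := hg.epi
  have : Epi (g ≫ f) := epi_comp _ _
  exact ⟨n, fun _ => S, fun _ => rfl, g ≫ f,
    isSplitEpi_of_epi_from_simple_biproduct S n (g ≫ f) this⟩

/-- Every object of `AddClosure {S}` receives an epimorphism from a finite sum of copies
of `S`. -/
lemma exists_epi_of_mem_addClosure (S : C) {A : C} (hA : A ∈ AddClosure C {S}) :
    ∃ (n : ℕ) (p : (⨁ fun _ : Fin n => S) ⟶ A), Epi p := by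
  obtain ⟨n, c, hc, g, hg⟩ := hA
  have hc' : c = fun _ => S := funext fun i => hc i
  subst hc'
  exact ⟨n, g, hg.epi⟩

lemma mem_filt_of_mem_addClosure {Sset : Set C} {X : C} (hX : X ∈ AddClosure C Sset) :
    X ∈ Filt C Sset :=
  FiltMem.ext (ShortComplex.mk (0 : (0 : C) ⟶ X) (𝟙 X) (by simp)) (shortExact_zero_id X)
    (FiltMem.of_isZero _ (isZero_zero C)) hX

lemma mem_filt_self (S : C) : S ∈ Filt C {S} :=
  mem_filt_of_mem_addClosure (mem_addClosure_self S)

/-- `Filt {S}` is closed under quotients, for `S` simple. -/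
lemma filt_quot (S : C) [Simple S] {X : C} (hX : X ∈ Filt C {S}) :
    ∀ {Y : C} (f : X ⟶ Y), Epi f → Y ∈ Filt C {S} := by
  induction hX with
  | of_isZero X h =>
    intro Y f hf
    haveI := hf
    exact FiltMem.of_isZero _ (isZero_of_epi_of_isZero f h)
  | of_iso X X' e hX ih =>
    intro Y f hf
    haveI := hf
    exact ih (e.hom ≫ f) (epi_comp _ _)
  | ext E hE h1 h3 ih =>
    intro Y f hf
    haveI := hf
    haveI := hE.mono_f
    haveI := hE.epi_g
    -- image of `E.f ≫ f` in `Y`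
    have him : image (E.f ≫ f) ∈ Filt C {S} :=
      ih (factorThruImage (E.f ≫ f)) inferInstance
    -- the cokernel is a quotient of `E.X₃`
    have hcond : E.f ≫ f ≫ cokernel.π (E.f ≫ f) = 0 := by
      rw [← Category.assoc]; exact cokernel.condition _
    have ht := hE.exact.g_desc (f ≫ cokernel.π (E.f ≫ f)) hcond
    have htepi : Epi (hE.exact.desc (f ≫ cokernel.π (E.f ≫ f)) hcond) := by
      have : Epi (E.g ≫ hE.exact.desc (f ≫ cokernel.π (E.f ≫ f)) hcond) := by
        rw [ht]; exact epi_comp _ _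
      exact epi_of_epi E.g _
    have hcoker : cokernel (E.f ≫ f) ∈ AddClosure C {S} :=
      mem_addClosure_of_epi S h3 _ htepi
    -- `cokernel (image.ι (E.f ≫ f)) ≅ cokernel (E.f ≫ f)`
    have hcoker' : cokernel (image.ι (E.f ≫ f)) ∈ AddClosure C {S} :=
      mem_addClosure_of_epi S hcoker (cokernelImageι (E.f ≫ f)).inv inferInstance
    exact FiltMem.ext _ (shortExact_cokernel (image.ι (E.f ≫ f))) him hcoker'

/-- `Filt Sset` is closed under extensions. -/
lemma filt_ext {Sset : Set C} {B : C} (hB : B ∈ Filt C Sset) :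
    ∀ (E : ShortComplex C), E.ShortExact → E.X₁ ∈ Filt C Sset → (E.X₃ ≅ B) →
      E.X₂ ∈ Filt C Sset := by
  induction hB with
  | of_isZero B h =>
    intro E hE h1 e
    haveI := hE.mono_f
    have hg : E.g = 0 := ((IsZero.of_iso h e).eq_of_tgt _ _)
    haveI : Epi E.f := (ShortComplex.exact_iff_epi E hg).mp hE.exact
    haveI : IsIso E.f := isIso_of_mono_of_epi _
    exact FiltMem.of_iso _ _ (asIso E.f) h1
  | of_iso X X' e' hX ih =>
    intro E hE h1 e
    exact ih E hE h1 (e ≪≫ e'.symm)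
  | ext E' hE' h1' h3' ih =>
    intro E hE h1 e
    haveI := hE.mono_f
    haveI := hE.epi_g
    haveI := hE'.mono_f
    haveI := hE'.epi_g
    haveI : Epi (E.g ≫ e.hom) := epi_comp _ _
    -- the pullback of `E.X₂ → E'.X₂ ← E'.X₁`
    have hzero1 : E.f ≫ E.g ≫ e.hom = 0 := by rw [← Category.assoc, E.zero, zero_comp]
    let a : E.X₁ ⟶ pullback (E.g ≫ e.hom) E'.f :=
      pullback.lift E.f 0 (by rw [hzero1, zero_comp])
    have ha : a ≫ pullback.snd (E.g ≫ e.hom) E'.f = 0 := pullback.lift_snd _ _ _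
    haveI : Mono a := by
      have : a ≫ pullback.fst (E.g ≫ e.hom) E'.f = E.f := pullback.lift_fst _ _ _
      exact mono_of_mono_fac this
    -- first short exact sequence : E.X₁ → P → E'.X₁
    have hE₁ : (ShortComplex.mk a (pullback.snd (E.g ≫ e.hom) E'.f) ha).ShortExact := by
      refine ShortComplex.ShortExact.mk' ?_ inferInstance inferInstance
      apply ShortComplex.exact_of_f_is_kernel
      have key : ∀ {W : C} (k : W ⟶ pullback (E.g ≫ e.hom) E'.f),
          k ≫ pullback.snd (E.g ≫ e.hom) E'.f = 0 →
          (k ≫ pullback.fst (E.g ≫ e.hom) E'.f) ≫ E.g = 0 := by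
        intro W k hk
        have h0 : (k ≫ pullback.fst (E.g ≫ e.hom) E'.f) ≫ (E.g ≫ e.hom) =
            (k ≫ pullback.snd (E.g ≫ e.hom) E'.f) ≫ E'.f := by
          simp [pullback.condition]
        rw [hk, zero_comp] at h0
        have h1 : ((k ≫ pullback.fst (E.g ≫ e.hom) E'.f) ≫ E.g) ≫ e.hom =
            0 ≫ e.hom := by simpa [Category.assoc] using h0
        exact (cancel_mono e.hom).mp h1
      refine KernelFork.IsLimit.ofι _ _
        (fun {W} k hk => hE.exact.lift (k ≫ pullback.fst (E.g ≫ e.hom) E'.f) (key k hk))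
        (fun {W} k hk => ?_) (fun {W} k hk m hm => ?_)
      · apply pullback.hom_ext
        · simp only [a, Category.assoc]; erw [pullback.lift_fst]; exact hE.exact.lift_f _ _
        · simp only [a, Category.assoc]; erw [pullback.lift_snd]; rw [comp_zero]; exact hk.symm
      · rw [← cancel_mono a]
        rw [hm]
        apply pullback.hom_ext
        · simp only [a, Category.assoc]; erw [pullback.lift_fst]; exact (hE.exact.lift_f _ _).symm
        · simp only [a, Category.assoc]; erw [pullback.lift_snd]; rw [comp_zero]; exact hk
    -- second short exact sequence : P → E.X₂ → E'.X₃
    have hzero2 : pullback.fst (E.g ≫ e.hom) E'.f ≫ E.g ≫ e.hom ≫ E'.g = 0 := by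
      have h0 := pullback.condition (f := E.g ≫ e.hom) (g := E'.f)
      calc pullback.fst (E.g ≫ e.hom) E'.f ≫ E.g ≫ e.hom ≫ E'.g
          = (pullback.fst (E.g ≫ e.hom) E'.f ≫ (E.g ≫ e.hom)) ≫ E'.g := by
            simp [Category.assoc]
        _ = (pullback.snd (E.g ≫ e.hom) E'.f ≫ E'.f) ≫ E'.g := by rw [h0]
        _ = 0 := by simp [E'.zero]
    haveI : Epi (E.g ≫ e.hom ≫ E'.g) := by
      rw [← Category.assoc]
      exact epi_comp _ _
    have hE₂ : (ShortComplex.mk (pullback.fst (E.g ≫ e.hom) E'.f) (E.g ≫ e.hom ≫ E'.g)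
        hzero2).ShortExact := by
      refine ShortComplex.ShortExact.mk' ?_ inferInstance inferInstance
      apply ShortComplex.exact_of_f_is_kernel
      refine KernelFork.IsLimit.ofι _ _
        (fun {W} k hk => pullback.lift k (hE'.exact.lift (k ≫ E.g ≫ e.hom) (by simpa using hk))
          (by rw [hE'.exact.lift_f]))
        (fun {W} k hk => pullback.lift_fst _ _ _) (fun {W} k hk m hm => ?_)
      · apply pullback.hom_ext
        · rw [pullback.lift_fst]
          exact hm
        · rw [pullback.lift_snd, ← cancel_mono E'.f, Category.assoc, hE'.exact.lift_f,
            ← pullback.condition, ← Category.assoc, hm]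
    have hP : pullback (E.g ≫ e.hom) E'.f ∈ Filt C Sset := ih _ hE₁ h1 (Iso.refl _)
    have := FiltMem.ext _ hE₂ hP h3'
    exact this

lemma isTorsionClass_filt (S : C) [Simple S] : IsTorsionClass C (Filt C {S}) where
  zero_mem Z hZ := FiltMem.of_isZero Z hZ
  quot_mem A B f hf hA := filt_quot S hA f hf
  ext_mem E hE h1 h3 := filt_ext h3 E hE h1 (Iso.refl _)

/-- `Filt {S}` is the smallest torsion class containing `S`. -/
lemma filt_subset_of_isTorsionClass {S : C} {T : Set C} (hT : IsTorsionClass C T) (hS : S ∈ T) :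
    Filt C {S} ⊆ T := by
  intro X hX
  have haddsub : AddClosure C {S} ⊆ T := by
    intro A hA
    obtain ⟨n, c, hc, g, hg⟩ := hA
    have hbip : (⨁ c) ∈ T := biproduct_mem_of_isTorsionClass hT c (fun i => by rw [hc i]; exact hS)
    exact hT.quot_mem g hg.epi hbip
  induction hX with
  | of_isZero X h => exact hT.zero_mem X h
  | of_iso X X' e hX ih => exact hT.iso_mem e ih
  | ext E hE h1 h3 ih => exact hT.ext_mem E hE ih (haddsub h3)

/-- If all maps `S ⟶ S'` vanish, then all maps from `Filt {S}` to `S'` vanish. -/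
lemma filt_subset_lperp {S S' : C} (h : ∀ f : S ⟶ S', f = 0) :
    Filt C {S} ⊆ LPerp C {S'} := by
  have haux : ∀ {A : C}, A ∈ AddClosure C {S} → ∀ g : A ⟶ S', g = 0 := by
    intro A hA g
    obtain ⟨n, p, hp⟩ := exists_epi_of_mem_addClosure S hA
    haveI := hp
    rw [← cancel_epi p]
    apply biproduct.hom_ext'
    intro i
    simp only [comp_zero]
    rw [← Category.assoc]
    exact h _
  intro X hX
  suffices h' : ∀ f : X ⟶ S', f = 0 by
    intro A hA f
    rw [Set.mem_singleton_iff] at hA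
    subst hA
    exact h' f
  induction hX with
  | of_isZero X hz => exact fun f => hz.eq_of_src f 0
  | of_iso X X' e hX ih =>
    intro f
    have := ih (e.hom ≫ f)
    calc f = e.inv ≫ e.hom ≫ f := by simp
    _ = e.inv ≫ 0 := by rw [this]
    _ = 0 := comp_zero
  | ext E hE h1 h3 ih =>
    intro f
    haveI := hE.epi_g
    have hf1 : E.f ≫ f = 0 := ih (E.f ≫ f)
    have hd := hE.exact.g_desc f hf1
    rw [← hd, haux h3 (hE.exact.desc f hf1), comp_zero]

lemma isIso_of_mk_comp_eq_mk {K A X : C} (i : K ⟶ A) (m : A ⟶ X) [Mono i] [Mono m]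
    (h : Subobject.mk (i ≫ m) = Subobject.mk m) : IsIso i := by
  have hle : Subobject.mk m ≤ Subobject.mk (i ≫ m) := h.ge
  let w : A ⟶ K := Subobject.ofMkLEMk m (i ≫ m) hle
  have hw : w ≫ (i ≫ m) = m := Subobject.ofMkLEMk_comp hle
  have hwi : w ≫ i = 𝟙 A := by
    rw [← cancel_mono m, Category.assoc, hw, Category.id_comp]
  have hiw : i ≫ w = 𝟙 K := by
    rw [← cancel_mono i, Category.assoc, hwi, Category.id_comp, Category.comp_id]
  exact ⟨w, hiw, hwi⟩

lemma not_isZero_cokernel_of_isCoatom {X : C} {M : Subobject X} (hM : IsCoatom M) :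
    ¬ IsZero (cokernel M.arrow) := by
  intro hz
  have hπ : cokernel.π M.arrow = 0 := hz.eq_of_tgt _ _
  haveI : Epi M.arrow := by
    constructor
    intro Z u v huv
    have hcond : M.arrow ≫ (u - v) = 0 := by rw [Preadditive.comp_sub, huv, sub_self]
    have h2 := cokernel.π_desc M.arrow (u - v) hcond
    rw [hπ, zero_comp] at h2
    have h3 : u - v = 0 := h2.symm
    rw [sub_eq_zero] at h3
    exact h3
  haveI : IsIso M.arrow := isIso_of_mono_of_epi _
  exact hM.1 (Subobject.eq_top_of_isIso_arrow M)

/-- The cokernel of the inclusion of a coatom is a simple object. -/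
lemma simple_cokernel_of_isCoatom {X : C} {M : Subobject X} (hM : IsCoatom M) :
    Simple (cokernel M.arrow) := by
  constructor
  intro Y f hf
  constructor
  · intro hiso h0
    subst h0
    haveI := hiso
    refine not_isZero_cokernel_of_isCoatom hM ?_
    rw [IsZero.iff_id_eq_zero, ← IsIso.inv_hom_id (0 : Y ⟶ cokernel M.arrow), comp_zero]
  · intro hne
    have hle : M ≤ Subobject.mk (pullback.fst (cokernel.π M.arrow) f) := by
      refine Subobject.le_mk_of_comm (pullback.lift M.arrow 0 (by simp)) ?_
      exact pullback.lift_fst _ _ _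
    rcases hle.lt_or_eq with hlt | heq
    · have htop : Subobject.mk (pullback.fst (cokernel.π M.arrow) f) = ⊤ := hM.2 _ hlt
      haveI : IsIso (pullback.fst (cokernel.π M.arrow) f) :=
        (Subobject.isIso_iff_mk_eq_top _).mpr htop
      have hcond := pullback.condition (f := cokernel.π M.arrow) (g := f)
      haveI : Epi ((inv (pullback.fst (cokernel.π M.arrow) f) ≫
          pullback.snd (cokernel.π M.arrow) f) ≫ f) := by
        rw [Category.assoc, ← hcond, IsIso.inv_hom_id_assoc]
        infer_instance
      haveI : Epi f := epi_of_epi (inv (pullback.fst (cokernel.π M.arrow) f) ≫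
          pullback.snd (cokernel.π M.arrow) f) f
      exact isIso_of_mono_of_epi f
    · exfalso
      apply hne
      have hw : Subobject.ofMkLE (pullback.fst (cokernel.π M.arrow) f) M heq.ge ≫ M.arrow =
          pullback.fst (cokernel.π M.arrow) f := Subobject.ofMkLE_arrow heq.ge
      have hsnd : pullback.snd (cokernel.π M.arrow) f ≫ f = 0 := by
        rw [← pullback.condition, ← hw, Category.assoc, cokernel.condition, comp_zero]
      haveI : Epi (pullback.snd (cokernel.π M.arrow) f) := by
        haveI : Epi (cokernel.π M.arrow) := inferInstance
        infer_instance
      exact (cancel_epi (pullback.snd (cokernel.π M.arrow) f)).mp (by rw [hsnd, comp_zero])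

/-- Every nonzero object in a noetherian abelian category has a simple quotient. -/
lemma exists_simple_quotient [Noetherian C] {X : C} (h : ¬ IsZero X) :
    ∃ (Y : C) (g : X ⟶ Y), Simple Y ∧ Epi g := by
  haveI : Nontrivial (Subobject X) := Subobject.nontrivial_of_not_isZero h
  haveI : IsCoatomic (Subobject X) :=
    isCoatomic_of_orderTop_gt_wellFounded (wellFounded_gt (α := Subobject X))
  obtain ⟨M, hM, -⟩ :=
    (IsCoatomic.eq_top_or_exists_le_coatom (⊥ : Subobject X)).resolve_left bot_ne_top
  exact ⟨cokernel M.arrow, cokernel.π M.arrow, simple_cokernel_of_isCoatom hM, inferInstance⟩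

/-- A torsion class containing all simple objects contains every object
(in a length category). -/
lemma eq_univ_of_forall_simple_mem [Noetherian C] [Artinian C] {V : Set C}
    (hV : IsTorsionClass C V) (hs : ∀ S : C, Simple S → S ∈ V) (X : C) : X ∈ V := by
  suffices h : ∀ A : Subobject X, (A : C) ∈ V by
    exact hV.iso_mem (asIso ((⊤ : Subobject X).arrow)) (h ⊤)
  intro A
  induction A using WellFounded.induction (wellFounded_lt (α := Subobject X)) with
  | _ A ih =>
    by_cases hz : IsZero (A : C)
    · exact hV.zero_mem _ hz
    · obtain ⟨S₀, g, hS₀, hg⟩ := exists_simple_quotient hz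
      haveI := hS₀
      haveI := hg
      -- the kernel of g, as a subobject of X
      have hlt : Subobject.mk (kernel.ι g ≫ A.arrow) < A := by
        rw [lt_iff_le_and_ne]
        constructor
        · exact Subobject.mk_le_of_comm (kernel.ι g) rfl
        · intro heq
          haveI : IsIso (kernel.ι g) := isIso_of_mk_comp_eq_mk (kernel.ι g) A.arrow
            (heq.trans (Subobject.mk_arrow A).symm)
          have : g = 0 := by
            rw [← cancel_epi (kernel.ι g), kernel.condition, comp_zero]
          exact (Simple.not_isZero S₀) (isZero_of_epi_eq_zero g this)
      have hB := ih _ hlt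
      have hker : kernel g ∈ V :=
        hV.iso_mem (Subobject.underlyingIso (kernel.ι g ≫ A.arrow)) hB
      exact hV.ext_mem _ (shortExact_kernel g) hker (hs _ hS₀)

end Auxiliary

/-- The Hasse arrows of `tors 𝒜` ending at `0` are exactly `Filt S → 0` for simples `S`,
labeled by `S`; the arrows starting at `𝒜` are exactly `𝒜 → ^⊥S` for simples `S`, labeled
by `S`; and `Filt S ⊆ ^⊥S'` iff `S ≇ S'` for simples `S, S'`. -/
theorem stmt_7 [Noetherian C] [Artinian C] :
    (∀ T : Set C, IsHasseArrow C T {Z : C | IsZero Z} ↔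
      ∃ S : C, Simple S ∧ T = Filt C {S}) ∧
    (∀ S : C, Simple S → IsBrickLabel C (Filt C {S}) {Z : C | IsZero Z} S) ∧
    (∀ U : Set C, IsHasseArrow C Set.univ U ↔ ∃ S : C, Simple S ∧ U = LPerp C {S}) ∧
    (∀ S : C, Simple S → IsBrickLabel C Set.univ (LPerp C {S}) S) ∧
    (∀ S S' : C, Simple S → Simple S' →
      (Filt C {S} ⊆ LPerp C {S'} ↔ IsEmpty (S ≅ S'))) := by
  classical
  have schur : ∀ (S S' : C), Simple S → Simple S' → IsEmpty (S ≅ S') → ∀ f : S ⟶ S', f = 0 := by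
    intro S S' hS hS' hno f
    haveI := hS
    haveI := hS'
    by_contra hf
    haveI := isIso_of_hom_simple hf
    exact hno.false (asIso f)
  have hbrick : ∀ S : C, Simple S → IsBrick C S := by
    intro S hS
    haveI := hS
    refine ⟨Simple.not_isZero S, fun f => ?_⟩
    by_cases hf : f = 0
    · exact Or.inl hf
    · exact Or.inr (isIso_of_hom_simple hf)
  have hid_ne : ∀ S : C, Simple S → S ∈ LPerp C {S} → False := by
    intro S hS hmem
    haveI := hS
    have : 𝟙 S = 0 := hmem S rfl (𝟙 S)
    exact Simple.not_isZero S (IsZero.iff_id_eq_zero S |>.mpr this)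
  have part5 : ∀ S S' : C, Simple S → Simple S' →
      (Filt C {S} ⊆ LPerp C {S'} ↔ IsEmpty (S ≅ S')) := by
    intro S S' hS hS'
    haveI := hS
    constructor
    · intro hsub
      refine ⟨fun e => ?_⟩
      have h0 : e.hom = 0 := hsub (mem_filt_self S) S' rfl e.hom
      have : 𝟙 S = 0 := by rw [← e.hom_inv_id, h0, zero_comp]
      exact Simple.not_isZero S (IsZero.iff_id_eq_zero S |>.mpr this)
    · intro hno
      exact filt_subset_lperp (schur S S' hS hS' hno)
  -- a simple object of `Filt C {S}` is isomorphic to `S`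
  have hsimple_in_filt : ∀ (S S₀ : C), Simple S → Simple S₀ → S₀ ∈ Filt C {S} →
      Nonempty (S₀ ≅ S) := by
    intro S S₀ hS hS₀ hmem
    by_contra hno
    have hempty : IsEmpty (S ≅ S₀) := ⟨fun e => hno ⟨e.symm⟩⟩
    have hsub := filt_subset_lperp (schur S S₀ hS hS₀ hempty)
    exact hid_ne S₀ hS₀ (hsub hmem)
  refine ⟨?_, ?_, ?_, ?_, part5⟩
  · -- part 1
    intro T
    constructor
    · rintro ⟨hT, hU0, hsub, hmax⟩
      obtain ⟨X, hXT, hXnz⟩ := Set.not_subset.mp hsub.2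
      obtain ⟨S, g, hS, hg⟩ := exists_simple_quotient hXnz
      haveI := hS
      have hST : S ∈ T := hT.quot_mem g hg hXT
      refine ⟨S, hS, ?_⟩
      have hFsub : Filt C {S} ⊆ T := filt_subset_of_isTorsionClass hT hST
      have h0F : {Z : C | IsZero Z} ⊆ Filt C {S} := fun Z hZ => FiltMem.of_isZero Z hZ
      rcases hmax (Filt C {S}) (isTorsionClass_filt S) h0F hFsub with h | h
      · exfalso
        have : S ∈ {Z : C | IsZero Z} := h ▸ mem_filt_self S
        exact Simple.not_isZero S this
      · exact h.symm
    · rintro ⟨S, hS, rfl⟩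
      haveI := hS
      refine ⟨isTorsionClass_filt S, isTorsionClass_zero, ⟨fun Z hZ => FiltMem.of_isZero Z hZ,
        fun hc => Simple.not_isZero S (hc (mem_filt_self S))⟩, ?_⟩
      intro V hV hV0 hVF
      by_cases hVz : ∀ X ∈ V, IsZero X
      · left
        exact Set.Subset.antisymm (fun X hX => hVz X hX) hV0
      · right
        push_neg at hVz
        obtain ⟨X, hXV, hXnz⟩ := hVz
        obtain ⟨S₀, g, hS₀, hg⟩ := exists_simple_quotient hXnz
        haveI := hS₀
        have hS₀V : S₀ ∈ V := hV.quot_mem g hg hXV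
        obtain ⟨e⟩ := hsimple_in_filt S S₀ hS hS₀ (hVF hS₀V)
        have hSV : S ∈ V := hV.iso_mem e hS₀V
        exact Set.Subset.antisymm hVF (filt_subset_of_isTorsionClass hV hSV)
  · -- part 2
    intro S hS
    haveI := hS
    exact ⟨hbrick S hS, fun A hA f => hA.eq_of_src f 0, mem_filt_self S⟩
  · -- part 3
    have hunivT : IsTorsionClass C (Set.univ : Set C) :=
      ⟨fun _ _ => trivial, fun _ _ _ _ _ => trivial, fun _ _ _ _ => trivial⟩
    intro U
    constructor
    · rintro ⟨hUniv, hU, hsub, hmax⟩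
      obtain ⟨X, -, hXU⟩ := Set.not_subset.mp hsub.2
      have hsimple : ∃ S : C, Simple S ∧ S ∉ U := by
        by_contra h
        push_neg at h
        exact hXU (eq_univ_of_forall_simple_mem hU (fun S hS => h S hS) X)
      obtain ⟨S, hS, hSU⟩ := hsimple
      haveI := hS
      refine ⟨S, hS, ?_⟩
      have hUsub : U ⊆ LPerp C {S} := by
        intro Y hY A hA f
        rw [Set.mem_singleton_iff] at hA
        subst hA
        by_contra hf
        haveI : Epi f := epi_of_nonzero_to_simple hf
        exact hSU (hU.quot_mem f inferInstance hY)
      rcases hmax (LPerp C {S}) (isTorsionClass_lperp S) hUsub (Set.subset_univ _) with h | h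
      · exact h.symm
      · exfalso
        exact hid_ne S hS (h ▸ Set.mem_univ S)
    · rintro ⟨S, hS, rfl⟩
      haveI := hS
      refine ⟨hunivT, isTorsionClass_lperp S, ⟨Set.subset_univ _,
        fun hc => hid_ne S hS (hc (Set.mem_univ S))⟩, ?_⟩
      intro V hV hLV hVuniv
      by_cases hV' : V ⊆ LPerp C {S}
      · left
        exact Set.Subset.antisymm hV' hLV
      · right
        obtain ⟨Y, hYV, hYn⟩ := Set.not_subset.mp hV'
        simp only [LPerp, Set.mem_setOf_eq, Set.mem_singleton_iff] at hYn
        push_neg at hYn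
        obtain ⟨A, rfl, f, hf⟩ := hYn
        haveI : Epi f := epi_of_nonzero_to_simple hf
        have hSV : A ∈ V := hV.quot_mem f inferInstance hYV
        refine Set.eq_univ_of_forall (eq_univ_of_forall_simple_mem hV ?_)
        intro S'' hS''
        haveI := hS''
        by_cases hiso : Nonempty (S'' ≅ A)
        · obtain ⟨e⟩ := hiso
          exact hV.iso_mem e.symm hSV
        · refine hLV ?_
          intro B hB g
          rw [Set.mem_singleton_iff] at hB
          subst hB
          exact schur S'' B hS'' hS ⟨fun e => hiso ⟨e⟩⟩ g
  · -- part 4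
    intro S hS
    haveI := hS
    exact ⟨hbrick S hS, fun A hA f => hA S rfl f, Set.mem_univ S⟩
end

section
/- Let 𝒜 be an abelian length category and [𝒰, 𝒯] a wide interval with 𝒲 := 𝒰^⊥ ∩ 𝒯. For every torsion class 𝒳 of the abelian category 𝒲, the smallest torsion class of 𝒜 containing 𝒰 ∪ 𝒳 equals 𝒰 * 𝒳, the extension closure in one step: T(𝒰 ∪ 𝒳) = 𝒰 * 𝒳. -/
open CategoryTheory CategoryTheory.Limits

universe v u

attribute [local instance] CategoryTheory.Abelian.hasFiniteBiproducts

variable (C : Type u) [Category.{v} C] [Abelian C]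

open ZeroObject

section Stmt10Aux

variable {C}

lemma stmt10_tors_iso_mem {T : Set C} (hT : IsTorsionClass C T) {A B : C} (e : A ≅ B)
    (hA : A ∈ T) : B ∈ T := hT.quot_mem e.hom inferInstance hA

lemma stmt10_rperp_of_mono {U : Set C} {A B : C} (f : A ⟶ B) (_ : Mono f)
    (hB : B ∈ RPerp C U) : A ∈ RPerp C U := fun U' hU' g => by
  rw [← cancel_mono f, zero_comp]
  exact hB U' hU' (g ≫ f)

lemma stmt10_shortExact_mono {A B : C} (f : A ⟶ B) [Mono f] :
    (ShortComplex.mk f (cokernel.π f) (cokernel.condition f)).ShortExact :=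
  ShortComplex.ShortExact.mk'
    (ShortComplex.exact_of_g_is_cokernel _ (cokernelIsCokernel f)) ‹_› inferInstance

lemma stmt10_pullback_shortExact {Y Q Z I : C} (c : Q ⟶ Z) [Epi c] (ι : I ⟶ Z) [Mono ι]
    (j : Y ⟶ Q) [Mono j] (w : j ≫ c = 0) (hj : IsLimit (KernelFork.ofι j w)) :
    (ShortComplex.mk (pullback.lift j 0 (by rw [w, zero_comp]) : Y ⟶ pullback c ι)
      (pullback.snd c ι) (pullback.lift_snd _ _ _)).ShortExact := by
  set k : Y ⟶ pullback c ι := pullback.lift j 0 (by rw [w, zero_comp]) with hk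
  have hkf : k ≫ pullback.fst c ι = j := pullback.lift_fst _ _ _
  have hmono : Mono k := by
    have : Mono (k ≫ pullback.fst c ι) := by rw [hkf]; infer_instance
    exact mono_of_mono k (pullback.fst c ι)
  refine ShortComplex.ShortExact.mk' ?_ hmono inferInstance
  apply ShortComplex.exact_of_f_is_kernel
  apply KernelFork.IsLimit.ofι' _ _ (fun {T} s hs => ?_)
  have hsc : (s ≫ pullback.fst c ι) ≫ c = 0 := by
    rw [Category.assoc, pullback.condition, ← Category.assoc, hs, zero_comp]
  obtain ⟨l, hl⟩ := Fork.IsLimit.lift' hj (s ≫ pullback.fst c ι)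
    (by rw [hsc, comp_zero])
  refine ⟨l, pullback.hom_ext ?_ ?_⟩
  · simp only [Category.assoc, pullback.lift_fst]
    simpa [hkf] using hl
  · simp only [Category.assoc, pullback.lift_snd, comp_zero]
    exact hs.symm

lemma stmt10_exists_torsionPart [Noetherian C] {U : Set C} (hU : IsTorsionClass C U) (M : C) :
    ∃ t : Subobject M, ((t : C) ∈ U) ∧ cokernel t.arrow ∈ RPerp C U := by
  obtain ⟨t, htU, hmax⟩ := WellFounded.has_min (wellFounded_gt (α := Subobject M))
    {P : Subobject M | (P : C) ∈ U}
    ⟨⊥, hU.zero_mem _ (IsZero.of_iso (isZero_zero C) Subobject.botCoeIsoZero)⟩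
  refine ⟨t, htU, fun U' hU' f => ?_⟩
  have himU : image f ∈ U := hU.quot_mem (factorThruImage f) inferInstance hU'
  have hses := stmt10_pullback_shortExact (cokernel.π t.arrow) (image.ι f) t.arrow
    (cokernel.condition _) (Abelian.monoIsKernelOfCokernel _ (colimit.isColimit _))
  have hNU : pullback (cokernel.π t.arrow) (image.ι f) ∈ U := hU.ext_mem _ hses htU himU
  have hle : t ≤ Subobject.mk (pullback.fst (cokernel.π t.arrow) (image.ι f)) :=
    Subobject.le_mk_of_comm
      (pullback.lift t.arrow 0 (by rw [cokernel.condition, zero_comp]))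
      (pullback.lift_fst _ _ _)
  have hmkU : (Subobject.mk (pullback.fst (cokernel.π t.arrow) (image.ι f)) : C) ∈ U :=
    stmt10_tors_iso_mem hU (Subobject.underlyingIso _).symm hNU
  have heq : Subobject.mk (pullback.fst (cokernel.π t.arrow) (image.ι f)) ≤ t := by
    by_contra hlt
    exact hmax _ hmkU (lt_of_le_of_ne hle (fun h => hlt (le_of_eq h.symm)))
  have hfac := Subobject.ofMkLE_arrow heq
  have hι : image.ι f = 0 := by
    rw [← cancel_epi (pullback.snd (cokernel.π t.arrow) (image.ι f)), comp_zero,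
      ← pullback.condition, ← hfac, Category.assoc, cokernel.condition, comp_zero]
  rw [← image.fac f, hι, comp_zero]

lemma stmt10_factor_thru_g {E : ShortComplex C} (hE : E.ShortExact) {Q : C} (h : E.X₂ ⟶ Q)
    (hz : E.f ≫ h = 0) : ∃ q : E.X₃ ⟶ Q, E.g ≫ q = h := by
  obtain ⟨q, hq⟩ := Cofork.IsColimit.desc' hE.gIsCokernel h (by rw [hz, zero_comp])
  exact ⟨q, hq⟩

lemma stmt10_coker_mem_rperp [Noetherian C] {U T W : Set C} (hU : IsTorsionClass C U)
    (hT : IsTorsionClass C T) (hUT : U ⊆ T) (hW : W = RPerp C U ∩ T) (hwide : IsWide C W)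
    {Y Q : C} (j : Y ⟶ Q) [Mono j] (hYW : Y ∈ W) (hQW : Q ∈ W) :
    cokernel j ∈ RPerp C U := by
  intro U' hU' g
  rw [hW] at hYW hQW
  have himU : image g ∈ U := hU.quot_mem (factorThruImage g) inferInstance hU'
  have hses := stmt10_pullback_shortExact (cokernel.π j) (image.ι g) j
    (cokernel.condition j) (Abelian.monoIsKernelOfCokernel _ (colimit.isColimit _))
  have hNT : pullback (cokernel.π j) (image.ι g) ∈ T :=
    hT.ext_mem _ hses hYW.2 (hUT himU)
  have hNperp : pullback (cokernel.π j) (image.ι g) ∈ RPerp C U :=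
    stmt10_rperp_of_mono (pullback.fst (cokernel.π j) (image.ι g)) inferInstance hQW.1
  have hNW : pullback (cokernel.π j) (image.ι g) ∈ W := by rw [hW]; exact ⟨hNperp, hNT⟩
  have hcokW : cokernel (pullback.lift j 0
      (by rw [cokernel.condition j, zero_comp]) : Y ⟶ pullback (cokernel.π j) (image.ι g)) ∈ W :=
    hwide.coker_mem _ (by rw [hW]; exact hYW) hNW
  have e2 : cokernel (pullback.lift j 0
      (by rw [cokernel.condition j, zero_comp]) : Y ⟶ pullback (cokernel.π j) (image.ι g))
      ≅ image g :=
    IsColimit.coconePointUniqueUpToIso (cokernelIsCokernel _) hses.gIsCokernel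
  have himW : image g ∈ W := by
    rw [hW] at hcokW ⊢
    exact ⟨stmt10_rperp_of_mono e2.inv inferInstance hcokW.1,
      hT.quot_mem e2.hom inferInstance hcokW.2⟩
  have hzero : IsZero (image g) := by
    rw [hW] at himW
    exact (Limits.IsZero.iff_id_eq_zero _).mpr (himW.1 (image g) himU (𝟙 _))
  rw [← image.fac g, hzero.eq_of_src (image.ι g) 0, comp_zero]

lemma stmt10_shortExact_id_zero (A : C) :
    (ShortComplex.mk (𝟙 A) (0 : A ⟶ (0 : C)) (by simp)).ShortExact :=
  ShortComplex.ShortExact.mk'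
    (ShortComplex.exact_of_f_is_kernel _ (KernelFork.IsLimit.ofι _ _ (fun g' _ => g')
      (fun _ _ => Category.comp_id _) (fun g' _ m hm => by simpa using hm)))
    inferInstance ⟨fun g₁ g₂ _ => (isZero_zero C).eq_of_src g₁ g₂⟩

lemma stmt10_shortExact_zero_id (A : C) :
    (ShortComplex.mk (0 : (0 : C) ⟶ A) (𝟙 A) (by simp)).ShortExact :=
  ShortComplex.ShortExact.mk'
    (ShortComplex.exact_of_g_is_cokernel _ (CokernelCofork.IsColimit.ofπ _ _ (fun g' _ => g')
      (fun _ _ => Category.id_comp _) (fun g' _ m hm => by simpa using hm)))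
    ⟨fun g₁ g₂ _ => (isZero_zero C).eq_of_tgt g₁ g₂⟩ inferInstance

end Stmt10Aux

/-- For a wide interval `[U,T]` with `W = U^⊥ ∩ T` and any torsion class `X` of `W`,
the smallest torsion class containing `U ∪ X` is `U * X`. -/
theorem stmt_10 [Noetherian C] [Artinian C]
    (U T : Set C) (hU : IsTorsionClass C U) (hT : IsTorsionClass C T) (hUT : U ⊆ T)
    (W : Set C) (hW : W = RPerp C U ∩ T) (hwide : IsWide C W)
    (X : Set C) (hX : IsTorsionClassIn C W X) :
    torsClosure C (U ∪ X) = ExtStar C U X := by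
  have hXW : X ⊆ W := hX.subset
  have hWT : W ⊆ T := fun A hA => by rw [hW] at hA; exact hA.2
  have hET : ExtStar C U X ⊆ T := by
    rintro M ⟨E, hE, h1, h3, ⟨e⟩⟩
    exact stmt10_tors_iso_mem hT e (hT.ext_mem E hE (hUT h1) (hWT (hXW h3)))
  have memExt : ∀ (M : C) (t : Subobject M), ((t : C) ∈ U) → cokernel t.arrow ∈ X →
      M ∈ ExtStar C U X := fun M t h1 h3 =>
    ⟨ShortComplex.mk t.arrow (cokernel.π t.arrow) (cokernel.condition _),
      stmt10_shortExact_mono _, h1, h3, ⟨Iso.refl M⟩⟩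
  have quotExt : ∀ ⦃A B : C⦄ (f : A ⟶ B), Epi f → A ∈ ExtStar C U X →
      B ∈ ExtStar C U X := by
    rintro A B f hf hA
    obtain ⟨E, hE, h1, h3, ⟨e⟩⟩ := id hA
    obtain ⟨t, htU, htperp⟩ := stmt10_exists_torsionPart hU B
    refine memExt B t htU ?_
    have hBT : B ∈ T := hT.quot_mem f hf (hET hA)
    have hQT : cokernel t.arrow ∈ T :=
      hT.quot_mem (cokernel.π t.arrow) inferInstance hBT
    have hQW : cokernel t.arrow ∈ W := by rw [hW]; exact ⟨htperp, hQT⟩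
    obtain ⟨q, hq⟩ := stmt10_factor_thru_g hE (e.hom ≫ f ≫ cokernel.π t.arrow)
      (htperp E.X₁ h1 _)
    have hepi : Epi (E.g ≫ q) := by
      rw [hq]
      have := hf
      infer_instance
    exact hX.quot_mem q (epi_of_epi E.g q) h3 hQW
  have extExt : ∀ E : ShortComplex C, E.ShortExact → E.X₁ ∈ ExtStar C U X →
      E.X₃ ∈ ExtStar C U X → E.X₂ ∈ ExtStar C U X := by
    rintro E hE hA hB
    obtain ⟨EA, hEA, hA1, hA3, ⟨eA⟩⟩ := id hA
    obtain ⟨EB, hEB, hB1, hB3, ⟨eB⟩⟩ := id hB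
    obtain ⟨t, htU, htperp⟩ := stmt10_exists_torsionPart hU E.X₂
    refine memExt _ t htU ?_
    set π : E.X₂ ⟶ cokernel t.arrow := cokernel.π t.arrow with hπdef
    have hMT : E.X₂ ∈ T := hT.ext_mem E hE (hET hA) (hET hB)
    have hQT : cokernel t.arrow ∈ T := hT.quot_mem π inferInstance hMT
    have hQW : cokernel t.arrow ∈ W := by rw [hW]; exact ⟨htperp, hQT⟩
    obtain ⟨ψ, hψ⟩ := stmt10_factor_thru_g hEA (eA.hom ≫ E.f ≫ π) (htperp EA.X₁ hA1 _)
    have hYperp : image ψ ∈ RPerp C U :=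
      stmt10_rperp_of_mono (image.ι ψ) inferInstance htperp
    have hYT : image ψ ∈ T :=
      hT.quot_mem (factorThruImage ψ) inferInstance (hWT (hXW hA3))
    have hYW : image ψ ∈ W := by rw [hW]; exact ⟨hYperp, hYT⟩
    have hYX : image ψ ∈ X := hX.quot_mem (factorThruImage ψ) inferInstance hA3 hYW
    have hZperp : cokernel (image.ι ψ) ∈ RPerp C U :=
      stmt10_coker_mem_rperp hU hT hUT hW hwide (image.ι ψ) hYW hQW
    have hZT : cokernel (image.ι ψ) ∈ T :=
      hT.quot_mem (cokernel.π (image.ι ψ)) inferInstance hQT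
    have hZW : cokernel (image.ι ψ) ∈ W := by rw [hW]; exact ⟨hZperp, hZT⟩
    have hψc : ψ ≫ cokernel.π (image.ι ψ) = 0 := by
      have h1 : ψ ≫ cokernel.π (image.ι ψ) =
          factorThruImage ψ ≫ image.ι ψ ≫ cokernel.π (image.ι ψ) := by
        rw [← Category.assoc, image.fac]
      rw [h1, cokernel.condition, comp_zero]
    have hzf : E.f ≫ (π ≫ cokernel.π (image.ι ψ)) = 0 := by
      rw [← cancel_epi eA.hom, comp_zero]
      calc eA.hom ≫ E.f ≫ π ≫ cokernel.π (image.ι ψ)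
          = (eA.hom ≫ E.f ≫ π) ≫ cokernel.π (image.ι ψ) := by
            simp only [Category.assoc]
        _ = (EA.g ≫ ψ) ≫ cokernel.π (image.ι ψ) := by rw [hψ]
        _ = EA.g ≫ ψ ≫ cokernel.π (image.ι ψ) := by rw [Category.assoc]
        _ = 0 := by rw [hψc, comp_zero]
    obtain ⟨ρ, hρ⟩ := stmt10_factor_thru_g hE (π ≫ cokernel.π (image.ι ψ)) hzf
    have hρepi : Epi ρ := by
      have : Epi (E.g ≫ ρ) := by rw [hρ]; infer_instance
      exact epi_of_epi E.g ρ
    obtain ⟨σ, hσ⟩ := stmt10_factor_thru_g hEB (eB.hom ≫ ρ) (hZperp EB.X₁ hB1 _)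
    have hσepi : Epi σ := by
      have : Epi (EB.g ≫ σ) := by rw [hσ]; have := hρepi; infer_instance
      exact epi_of_epi EB.g σ
    have hZX : cokernel (image.ι ψ) ∈ X := hX.quot_mem σ hσepi hB3 hZW
    exact hX.ext_mem _ (stmt10_shortExact_mono (image.ι ψ)) hYX hZX
  have hUsub : U ⊆ ExtStar C U X := fun A hA =>
    ⟨ShortComplex.mk (𝟙 A) (0 : A ⟶ (0 : C)) (by simp), stmt10_shortExact_id_zero A, hA,
      hX.zero_mem _ (isZero_zero C), ⟨Iso.refl A⟩⟩
  have hXsub : X ⊆ ExtStar C U X := fun A hA =>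
    ⟨ShortComplex.mk (0 : (0 : C) ⟶ A) (𝟙 A) (by simp), stmt10_shortExact_zero_id A,
      hU.zero_mem _ (isZero_zero C), hA, ⟨Iso.refl A⟩⟩
  apply Set.Subset.antisymm
  · exact Set.sInter_subset_of_mem
      ⟨⟨fun Z hz => hUsub (hU.zero_mem Z hz), quotExt, extExt⟩,
        Set.union_subset hUsub hXsub⟩
  · rintro M ⟨E, hE, h1, h3, ⟨e⟩⟩ V ⟨hVt, hVsub⟩
    exact hVt.quot_mem e.hom inferInstance
      (hVt.ext_mem E hE (hVsub (Set.mem_union_left _ h1))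
        (hVsub (Set.mem_union_right _ h3)))
end
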